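/- Let Λ_c be the conifold algebra. There are exactly two ℂ-algebra homomorphisms ρ : Λ_c → M₂(ℂ) for which ρ(ξ₃) is a scalar multiple of the identity matrix; they are given by ρ(ξ₁) = ρ(ξ₂) = 0 together with ρ(ξ₃) = Id, and ρ(ξ₁) = ρ(ξ₂) = 0 together with ρ(ξ₃) = −Id, respectively. -/

import Mathlib

open MvPolynomial in
/-- Generators of the relations of the conifold algebra `Λ_c`:
`ξ₁²ξ₂ = ξ₂ξ₁²`, `ξ₁ξ₂² = ξ₂²ξ₁`, `ξ₁ξ₃ = −ξ₃ξ₁`, `ξ₂ξ₃ = −ξ₃ξ₂`, `ξ₃² = 1`. -/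
inductive ConifoldRel : FreeAlgebra ℂ (Fin 3) → FreeAlgebra ℂ (Fin 3) → Prop
  | r1 : ConifoldRel ((FreeAlgebra.ι ℂ (0 : Fin 3)) ^ 2 * FreeAlgebra.ι ℂ (1 : Fin 3))
      (FreeAlgebra.ι ℂ (1 : Fin 3) * (FreeAlgebra.ι ℂ (0 : Fin 3)) ^ 2)
  | r2 : ConifoldRel (FreeAlgebra.ι ℂ (0 : Fin 3) * (FreeAlgebra.ι ℂ (1 : Fin 3)) ^ 2)
      ((FreeAlgebra.ι ℂ (1 : Fin 3)) ^ 2 * FreeAlgebra.ι ℂ (0 : Fin 3))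
  | r3 : ConifoldRel (FreeAlgebra.ι ℂ (0 : Fin 3) * FreeAlgebra.ι ℂ (2 : Fin 3))
      (-(FreeAlgebra.ι ℂ (2 : Fin 3) * FreeAlgebra.ι ℂ (0 : Fin 3)))
  | r4 : ConifoldRel (FreeAlgebra.ι ℂ (1 : Fin 3) * FreeAlgebra.ι ℂ (2 : Fin 3))
      (-(FreeAlgebra.ι ℂ (2 : Fin 3) * FreeAlgebra.ι ℂ (1 : Fin 3)))
  | r5 : ConifoldRel ((FreeAlgebra.ι ℂ (2 : Fin 3)) ^ 2) 1

/-- The conifold algebra `Λ_c = ℂ⟨ξ₁,ξ₂,ξ₃⟩/(relations)`. -/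
abbrev ConifoldAlgebra : Type := RingQuot ConifoldRel

/-- The generators `ξ₁, ξ₂, ξ₃` of the conifold algebra. -/
noncomputable def cxi (i : Fin 3) : ConifoldAlgebra :=
  RingQuot.mkAlgHom ℂ ConifoldRel (FreeAlgebra.ι ℂ i)

/-- The image `τ^♯(z₃) = ½(ξ₁ξ₂+ξ₂ξ₁) + ½(ξ₁ξ₂−ξ₂ξ₁)ξ₃` in `Λ_c`. -/
noncomputable def tauZ : Fin 4 → ConifoldAlgebra :=
  ![cxi 0 ^ 2, cxi 1 ^ 2,
    (1 / 2 : ℂ) • (cxi 0 * cxi 1 + cxi 1 * cxi 0) +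
      (1 / 2 : ℂ) • ((cxi 0 * cxi 1 - cxi 1 * cxi 0) * cxi 2),
    (1 / 2 : ℂ) • (cxi 0 * cxi 1 + cxi 1 * cxi 0) -
      (1 / 2 : ℂ) • ((cxi 0 * cxi 1 - cxi 1 * cxi 0) * cxi 2)]

noncomputable def conifoldRep (c : ℂ) (hc : c * c = 1) :
    ConifoldAlgebra →ₐ[ℂ] Matrix (Fin 2) (Fin 2) ℂ :=
  RingQuot.liftAlgHom ℂ ⟨FreeAlgebra.lift ℂ ![0, 0, c • (1 : Matrix (Fin 2) (Fin 2) ℂ)], by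
    intro x y h
    induction h <;> simp [smul_smul, pow_two, hc]⟩

lemma conifoldRep_cxi (c : ℂ) (hc : c * c = 1) (i : Fin 3) :
    conifoldRep c hc (cxi i) = (![0, 0, c • (1 : Matrix (Fin 2) (Fin 2) ℂ)]) i := by
  simp [conifoldRep, cxi, RingQuot.liftAlgHom_mkAlgHom_apply]

lemma cxi_rel3 : cxi 0 * cxi 2 = -(cxi 2 * cxi 0) := by
  have := RingQuot.mkAlgHom_rel ℂ ConifoldRel.r3
  simpa [cxi, map_mul, map_neg] using this

lemma cxi_rel4 : cxi 1 * cxi 2 = -(cxi 2 * cxi 1) := by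
  have := RingQuot.mkAlgHom_rel ℂ ConifoldRel.r4
  simpa [cxi, map_mul, map_neg] using this

lemma cxi_rel5 : cxi 2 ^ 2 = 1 := by
  have := RingQuot.mkAlgHom_rel ℂ ConifoldRel.r5
  simpa [cxi, map_pow, map_one] using this

lemma rep_ext {ρ : ConifoldAlgebra →ₐ[ℂ] Matrix (Fin 2) (Fin 2) ℂ} {c : ℂ} {hc : c * c = 1}
    (h0 : ρ (cxi 0) = 0) (h1 : ρ (cxi 1) = 0)
    (h2 : ρ (cxi 2) = c • (1 : Matrix (Fin 2) (Fin 2) ℂ)) :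
    ρ = conifoldRep c hc := by
  apply RingQuot.ringQuot_ext'
  apply FreeAlgebra.hom_ext
  funext i
  fin_cases i <;>
    simp_all [Function.comp, AlgHom.comp_apply, cxi, conifoldRep,
      RingQuot.liftAlgHom_mkAlgHom_apply]

/-- There are exactly two representations `ρ : Λ_c → M₂(ℂ)` for which `ρ(ξ₃)` is a
scalar matrix: `ξ₁,ξ₂ ↦ 0` with `ξ₃ ↦ Id`, and `ξ₁,ξ₂ ↦ 0` with `ξ₃ ↦ −Id`. -/
theorem point_components_of_representation_variety :
    ∃ ρ₁ ρ₂ : ConifoldAlgebra →ₐ[ℂ] Matrix (Fin 2) (Fin 2) ℂ,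
      ρ₁ ≠ ρ₂ ∧
      (ρ₁ (cxi 0) = 0 ∧ ρ₁ (cxi 1) = 0 ∧ ρ₁ (cxi 2) = 1) ∧
      (ρ₂ (cxi 0) = 0 ∧ ρ₂ (cxi 1) = 0 ∧ ρ₂ (cxi 2) = -1) ∧
      ∀ ρ : ConifoldAlgebra →ₐ[ℂ] Matrix (Fin 2) (Fin 2) ℂ,
        (∃ c : ℂ, ρ (cxi 2) = c • (1 : Matrix (Fin 2) (Fin 2) ℂ)) →
        ρ = ρ₁ ∨ ρ = ρ₂ := by
  refine ⟨conifoldRep 1 (by norm_num), conifoldRep (-1) (by norm_num), ?_, ?_, ?_, ?_⟩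
  · intro h
    have h2 := congrArg (fun f => (f (cxi 2) : Matrix (Fin 2) (Fin 2) ℂ) 0 0) h
    norm_num [conifoldRep_cxi, Matrix.one_apply] at h2
    change (1 : Matrix (Fin 2) (Fin 2) ℂ) 0 0 = (-1 : Matrix (Fin 2) (Fin 2) ℂ) 0 0 at h2
    norm_num [Matrix.one_apply] at h2
  · refine ⟨?_, ?_, ?_⟩ <;> simp [conifoldRep_cxi]
  · refine ⟨?_, ?_, ?_⟩ <;> simp [conifoldRep_cxi]
  · rintro ρ ⟨c, hc⟩
    have hsq : (c • (1 : Matrix (Fin 2) (Fin 2) ℂ)) ^ 2 = 1 := by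
      rw [← hc, ← map_pow, cxi_rel5, map_one]
    have hc2 : c ^ 2 = 1 := by
      rw [smul_pow, one_pow] at hsq
      simpa [Matrix.one_apply] using congrArg (fun M : Matrix (Fin 2) (Fin 2) ℂ => M 0 0) hsq
    have hcne : c ≠ 0 := by rintro rfl; simp at hc2
    have h0 : ρ (cxi 0) = 0 := by
      have := congrArg ρ cxi_rel3
      rw [map_mul, map_neg, map_mul, hc] at this
      have h2 : (2 * c) • ρ (cxi 0) = 0 := by
        rw [two_mul, add_smul]
        simpa [Matrix.mul_smul, Matrix.smul_mul, neg_smul, add_eq_zero_iff_eq_neg] using this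
      have := smul_eq_zero.1 h2
      rcases this with h | h
      · exact absurd h (by simpa using hcne)
      · exact h
    have h1 : ρ (cxi 1) = 0 := by
      have := congrArg ρ cxi_rel4
      rw [map_mul, map_neg, map_mul, hc] at this
      have h2 : (2 * c) • ρ (cxi 1) = 0 := by
        rw [two_mul, add_smul]
        simpa [Matrix.mul_smul, Matrix.smul_mul, neg_smul, add_eq_zero_iff_eq_neg] using this
      have := smul_eq_zero.1 h2
      rcases this with h | h
      · exact absurd h (by simpa using hcne)
      · exact h
    have hcor : c = 1 ∨ c = -1 := by
      have hfac : (c - 1) * (c + 1) = 0 := by linear_combination hc2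
      rcases mul_eq_zero.1 hfac with h | h
      · exact Or.inl (sub_eq_zero.mp h)
      · exact Or.inr (eq_neg_of_add_eq_zero_left h)
    rcases hcor with rfl | rfl
    · exact Or.inl (rep_ext h0 h1 hc)
    · exact Or.inr (rep_ext h0 h1 hc)
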